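/- Let C be a semiring such that the unique homomorphism from the natural numbers to C is surjective, and let R = M_n(C) be the semiring of n×n matrices over C. Then the set D = { e_{11}, ..., e_{nn} } of diagonal matrix units is an additive spine of R. -/

import Mathlib

def halo (R : Type*) {V : Type*} [Semiring R] [AddCommMonoid V] [Module R V]
    (S : Set V) : Set V :=
  {v | ∃ l m : R, l • v ∈ S ∧ m • (l • v) = v}

def IsAdditiveSpine (R : Type*) {V : Type*} [Semiring R] [AddCommMonoid V] [Module R V]
    (S : Set V) : Prop :=
  AddSubmonoid.closure (halo R S) = ⊤

theorem diag_units_spine {C : Type*} [Semiring C]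
    (hC : Function.Surjective (Nat.cast : ℕ → C)) (n : ℕ) :
    IsAdditiveSpine (Matrix (Fin n) (Fin n) C)
      (Set.range fun i : Fin n => Matrix.single i i (1 : C)) := by
  rw [IsAdditiveSpine, eq_top_iff]
  intro M _
  have key : ∀ i j : Fin n, (Matrix.single i j (1 : C) : Matrix (Fin n) (Fin n) C) ∈
      halo (Matrix (Fin n) (Fin n) C)
        (Set.range fun i : Fin n => Matrix.single i i (1 : C)) := by
    intro i j
    refine ⟨Matrix.single j i 1, Matrix.single i j 1, ⟨j, ?_⟩, ?_⟩
    · show Matrix.single j j (1 : C) =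
        Matrix.single j i 1 * Matrix.single i j 1
      rw [Matrix.single_mul_single_same, one_mul]
    · show Matrix.single i j 1 *
        (Matrix.single j i 1 * Matrix.single i j 1) =
        Matrix.single i j 1
      rw [Matrix.single_mul_single_same, Matrix.single_mul_single_same, one_mul, one_mul]
  have hmem : ∀ i j : Fin n, (Matrix.single i j (M i j) : Matrix (Fin n) (Fin n) C) ∈
      AddSubmonoid.closure (halo (Matrix (Fin n) (Fin n) C)
        (Set.range fun i : Fin n => Matrix.single i i (1 : C))) := by
    intro i j
    obtain ⟨N, hN⟩ := hC (M i j)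
    have : Matrix.single i j (M i j) = N • Matrix.single i j (1 : C) := by
      rw [← hN, ← Nat.cast_smul_eq_nsmul C, Matrix.smul_single, smul_eq_mul, mul_one]
    rw [this]
    exact AddSubmonoid.nsmul_mem _ (AddSubmonoid.subset_closure (key i j)) N
  rw [Matrix.matrix_eq_sum_single M]
  exact AddSubmonoid.sum_mem _ fun i _ => AddSubmonoid.sum_mem _ fun j _ => hmem i j
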